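/- In the degree-corrected stochastic block model setup with λ_f > 0 and λ_w ≥ 0, the smallest eigenvalue of 𝔏_{f,λ} = I_p − 𝔈_λ^⊤𝔈_λ satisfies eigmin(𝔏_{f,λ}) ≥ λ_f / (max_j θ_j C(·,ℓ_j) + λ_f) > 0, and consequently ‖𝔈_λ‖ ≤ √( max_j θ_j C(·,ℓ_j) / (max_j θ_j C(·,ℓ_j) + λ_f) ) < 1. -/

import Mathlib

open Matrix BigOperators

/-- Spectral (ℓ2 operator) norm of a real matrix. -/
noncomputable def specNorm {m n : ℕ} (A : Matrix (Fin m) (Fin n) ℝ) : ℝ :=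
  ‖LinearMap.toContinuousLinearMap (Matrix.toEuclideanLin A)‖

/-- in the DCSBM with `λ_f > 0` and `λ_w ≥ 0`, the smallest eigenvalue
of `𝔏_{f,λ} = I − 𝔈_λ^⊤𝔈_λ` is at least `λ_f/(max_j θ_j C(·,ℓ_j) + λ_f) > 0`, and
`‖𝔈_λ‖ ≤ √(max_j θ_j C(·,ℓ_j)/(max_j θ_j C(·,ℓ_j) + λ_f)) < 1`. -/
theorem stmt_6 (n p K : ℕ) (hn : 0 < n) (hp : 0 < p) (hK : 0 < K)
    (kw : Fin n → Fin K) (ll : Fin p → Fin K)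
    (nsize : Fin K → ℕ)
    (hnsize : ∀ a, nsize a = (Finset.univ.filter (fun i => kw i = a)).card)
    (hnpos : ∀ a, 0 < nsize a)
    (θ : Fin p → ℝ) (hθ : ∀ j, 0 < θ j)
    (hθsum : ∀ a, ∑ j ∈ Finset.univ.filter (fun j => ll j = a), θ j = 1)
    (C : Matrix (Fin K) (Fin K) ℝ) (hC : ∀ a b, 0 ≤ C a b)
    (Crow : Fin K → ℝ) (hCrow : ∀ a, Crow a = ∑ b, C a b)
    (Ccol : Fin K → ℝ) (hCcol : ∀ b, Ccol b = ∑ a, C a b)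
    (Bb : Matrix (Fin n) (Fin p) ℝ)
    (hBb : ∀ i j, Bb i j = θ j * C (kw i) (ll j) / (nsize (kw i) : ℝ))
    (lamw lamf : ℝ) (hlamw : 0 ≤ lamw) (hlamf : 0 < lamf)
    (hwpos : ∀ i, 0 < Crow (kw i) / (nsize (kw i) : ℝ) + lamw)
    (Ee : Matrix (Fin n) (Fin p) ℝ)
    (hEe : Ee = Matrix.diagonal
        (fun i => 1 / Real.sqrt (Crow (kw i) / (nsize (kw i) : ℝ) + lamw)) * Bb *
      Matrix.diagonal (fun j => 1 / Real.sqrt (θ j * Ccol (ll j) + lamf)))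
    (Lfl : Matrix (Fin p) (Fin p) ℝ) (hLfl : Lfl = 1 - Eeᵀ * Ee)
    (maxd : ℝ)
    (hmaxd : maxd = Finset.univ.sup' ⟨⟨0, hp⟩, Finset.mem_univ _⟩
      (fun j => θ j * Ccol (ll j))) :
    (∀ (μ : ℝ) (x : Fin p → ℝ), x ≠ 0 → Lfl.mulVec x = μ • x →
      lamf / (maxd + lamf) ≤ μ) ∧
    0 < lamf / (maxd + lamf) ∧
    specNorm Ee ≤ Real.sqrt (maxd / (maxd + lamf)) ∧
    Real.sqrt (maxd / (maxd + lamf)) < 1 := by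
  -- basic positivity facts
  have hd0 : ∀ j, 0 ≤ θ j * Ccol (ll j) := fun j =>
    mul_nonneg (hθ j).le (by rw [hCcol]; exact Finset.sum_nonneg fun a _ => hC a _)
  have hdle : ∀ j, θ j * Ccol (ll j) ≤ maxd := fun j => by
    rw [hmaxd]; exact Finset.le_sup' (fun j => θ j * Ccol (ll j)) (Finset.mem_univ j)
  have hmaxd0 : 0 ≤ maxd := le_trans (hd0 ⟨0, hp⟩) (hdle ⟨0, hp⟩)
  have hden : 0 < maxd + lamf := by linarith
  have hf : ∀ j, 0 < θ j * Ccol (ll j) + lamf := fun j => by have := hd0 j; linarith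
  have hB0 : ∀ i j, 0 ≤ Bb i j := fun i j => by
    rw [hBb]; exact div_nonneg (mul_nonneg (hθ j).le (hC _ _)) (Nat.cast_nonneg _)
  have hEij : ∀ i j, Ee i j =
      1 / Real.sqrt (Crow (kw i) / (nsize (kw i) : ℝ) + lamw) * Bb i j *
        (1 / Real.sqrt (θ j * Ccol (ll j) + lamf)) := by
    intro i j; rw [hEe, Matrix.mul_diagonal, Matrix.diagonal_mul]
  have hEx : ∀ (x : Fin p → ℝ) (i : Fin n), Ee.mulVec x i =
      (1 / Real.sqrt (Crow (kw i) / (nsize (kw i) : ℝ) + lamw)) *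
        ∑ j, Bb i j * (x j / Real.sqrt (θ j * Ccol (ll j) + lamf)) := by
    intro x i
    rw [Matrix.mulVec, dotProduct, Finset.mul_sum]
    exact Finset.sum_congr rfl fun j _ => by rw [hEij]; ring
  -- row sums of Bb
  have rowsum : ∀ i, ∑ j, Bb i j = Crow (kw i) / (nsize (kw i) : ℝ) := by
    intro i
    have h1 : ∑ j, θ j * C (kw i) (ll j) = Crow (kw i) := by
      rw [hCrow, ← Finset.sum_fiberwise Finset.univ ll (fun j => θ j * C (kw i) (ll j))]
      refine Finset.sum_congr rfl fun b _ => ?_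
      rw [Finset.sum_congr rfl (fun j hj => by
        rw [(Finset.mem_filter.1 hj).2] :
        ∀ j ∈ Finset.univ.filter (fun j => ll j = b),
          θ j * C (kw i) (ll j) = θ j * C (kw i) b),
        ← Finset.sum_mul, hθsum, one_mul]
    calc ∑ j, Bb i j = (∑ j, θ j * C (kw i) (ll j)) / (nsize (kw i) : ℝ) := by
          rw [Finset.sum_div]; exact Finset.sum_congr rfl fun j _ => hBb i j
      _ = Crow (kw i) / (nsize (kw i) : ℝ) := by rw [h1]
  -- column sums of Bb
  have colsum : ∀ j, ∑ i, Bb i j = θ j * Ccol (ll j) := by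
    intro j
    rw [← Finset.sum_fiberwise Finset.univ kw (fun i => Bb i j), hCcol, Finset.mul_sum]
    refine Finset.sum_congr rfl fun a _ => ?_
    have hna : (nsize a : ℝ) ≠ 0 := Nat.cast_ne_zero.2 (hnpos a).ne'
    rw [Finset.sum_congr rfl (fun i hi => by
        rw [hBb, (Finset.mem_filter.1 hi).2] :
      ∀ i ∈ Finset.univ.filter (fun i => kw i = a),
        Bb i j = θ j * C a (ll j) / (nsize a : ℝ)),
      Finset.sum_const, ← hnsize a, nsmul_eq_mul]
    field_simp
  -- the key quadratic-form bound
  have key : ∀ x : Fin p → ℝ,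
      ∑ i, (Ee.mulVec x i) ^ 2 ≤ (maxd / (maxd + lamf)) * ∑ j, (x j) ^ 2 := by
    intro x
    set y : Fin p → ℝ := fun j => x j / Real.sqrt (θ j * Ccol (ll j) + lamf) with hy
    have step1 : ∀ i, (Ee.mulVec x i) ^ 2 ≤ ∑ j, Bb i j * (y j) ^ 2 := by
      intro i
      have hS0 : 0 ≤ ∑ j, Bb i j * (y j) ^ 2 :=
        Finset.sum_nonneg fun j _ => mul_nonneg (hB0 i j) (sq_nonneg _)
      have hCS : (∑ j, Bb i j * y j) ^ 2 ≤ (∑ j, Bb i j) * ∑ j, Bb i j * (y j) ^ 2 := by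
        have h := Finset.sum_mul_sq_le_sq_mul_sq Finset.univ
          (fun j => Real.sqrt (Bb i j)) (fun j => Real.sqrt (Bb i j) * y j)
        have e1 : ∀ j : Fin p,
            Real.sqrt (Bb i j) * (Real.sqrt (Bb i j) * y j) = Bb i j * y j := fun j => by
          rw [← mul_assoc, Real.mul_self_sqrt (hB0 i j)]
        have e2 : ∀ j : Fin p, Real.sqrt (Bb i j) ^ 2 = Bb i j := fun j =>
          Real.sq_sqrt (hB0 i j)
        have e3 : ∀ j : Fin p,
            (Real.sqrt (Bb i j) * y j) ^ 2 = Bb i j * (y j) ^ 2 := fun j => by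
          rw [mul_pow, e2]
        rw [Finset.sum_congr rfl fun j _ => e1 j, Finset.sum_congr rfl fun j _ => e2 j,
          Finset.sum_congr rfl fun j _ => e3 j] at h
        exact h
      have hwle : Crow (kw i) / (nsize (kw i) : ℝ) ≤
          Crow (kw i) / (nsize (kw i) : ℝ) + lamw := le_add_of_nonneg_right hlamw
      calc (Ee.mulVec x i) ^ 2
          = (1 / (Crow (kw i) / (nsize (kw i) : ℝ) + lamw)) * (∑ j, Bb i j * y j) ^ 2 := by
            rw [hEx x i, mul_pow, div_pow, one_pow, Real.sq_sqrt (hwpos i).le]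
        _ ≤ (1 / (Crow (kw i) / (nsize (kw i) : ℝ) + lamw)) *
              ((∑ j, Bb i j) * ∑ j, Bb i j * (y j) ^ 2) :=
            mul_le_mul_of_nonneg_left hCS (one_div_nonneg.2 (hwpos i).le)
        _ = ((Crow (kw i) / (nsize (kw i) : ℝ)) / (Crow (kw i) / (nsize (kw i) : ℝ) + lamw)) *
              ∑ j, Bb i j * (y j) ^ 2 := by rw [rowsum i]; ring
        _ ≤ 1 * ∑ j, Bb i j * (y j) ^ 2 :=
            mul_le_mul_of_nonneg_right ((div_le_one (hwpos i)).2 hwle) hS0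
        _ = ∑ j, Bb i j * (y j) ^ 2 := one_mul _
    calc ∑ i, (Ee.mulVec x i) ^ 2
        ≤ ∑ i, ∑ j, Bb i j * (y j) ^ 2 := Finset.sum_le_sum fun i _ => step1 i
      _ = ∑ j, (∑ i, Bb i j) * (y j) ^ 2 := by
          rw [Finset.sum_comm]
          exact Finset.sum_congr rfl fun j _ => (Finset.sum_mul _ _ _).symm
      _ = ∑ j, (θ j * Ccol (ll j)) * (y j) ^ 2 := by
          exact Finset.sum_congr rfl fun j _ => by rw [colsum j]
      _ ≤ ∑ j, (maxd / (maxd + lamf)) * (x j) ^ 2 := by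
          refine Finset.sum_le_sum fun j _ => ?_
          have hyj : (y j) ^ 2 = (x j) ^ 2 / (θ j * Ccol (ll j) + lamf) := by
            rw [hy]; simp only [div_pow, Real.sq_sqrt (hf j).le]
          rw [hyj]
          have hq : θ j * Ccol (ll j) / (θ j * Ccol (ll j) + lamf) ≤
              maxd / (maxd + lamf) := by
            rw [div_le_div_iff₀ (hf j) hden]
            nlinarith [hdle j, hd0 j, hlamf.le]
          calc θ j * Ccol (ll j) * (x j ^ 2 / (θ j * Ccol (ll j) + lamf))
              = (θ j * Ccol (ll j) / (θ j * Ccol (ll j) + lamf)) * x j ^ 2 := by ring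
            _ ≤ maxd / (maxd + lamf) * x j ^ 2 :=
              mul_le_mul_of_nonneg_right hq (sq_nonneg (x j))
      _ = (maxd / (maxd + lamf)) * ∑ j, (x j) ^ 2 := (Finset.mul_sum _ _ _).symm
  refine ⟨?_, div_pos hlamf hden, ?_, ?_⟩
  · -- eigenvalue bound
    intro μ x hx hμ
    have hSpos : 0 < ∑ j, (x j) ^ 2 := by
      obtain ⟨j0, hj0⟩ := Function.ne_iff.1 hx
      exact Finset.sum_pos' (fun j _ => sq_nonneg _) ⟨j0, Finset.mem_univ _, lt_of_le_of_ne (sq_nonneg _) (Ne.symm (pow_ne_zero 2 hj0))⟩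
    have hdot : x ⬝ᵥ Lfl.mulVec x = ∑ j, (x j) ^ 2 - ∑ i, (Ee.mulVec x i) ^ 2 := by
      rw [hLfl, Matrix.sub_mulVec, dotProduct_sub, Matrix.one_mulVec]
      congr 1
      · simp [dotProduct, sq]
      · rw [← Matrix.mulVec_mulVec, Matrix.dotProduct_mulVec, Matrix.vecMul_transpose]
        simp [dotProduct, sq]
    have hr : x ⬝ᵥ (μ • x) = μ * ∑ j, (x j) ^ 2 := by
      simp only [dotProduct, Pi.smul_apply, smul_eq_mul, Finset.mul_sum]
      exact Finset.sum_congr rfl fun j _ => by ring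
    have h1 : μ * ∑ j, (x j) ^ 2 = ∑ j, (x j) ^ 2 - ∑ i, (Ee.mulVec x i) ^ 2 := by
      have := congrArg (fun v => x ⬝ᵥ v) hμ
      change x ⬝ᵥ Lfl.mulVec x = x ⬝ᵥ (μ • x) at this
      rw [hdot, hr] at this
      linarith [this]
    have h2 := key x
    have h3 : (1 - maxd / (maxd + lamf)) * ∑ j, (x j) ^ 2 ≤ μ * ∑ j, (x j) ^ 2 := by
      have expand : (1 - maxd / (maxd + lamf)) * ∑ j, (x j) ^ 2 =
          ∑ j, (x j) ^ 2 - maxd / (maxd + lamf) * ∑ j, (x j) ^ 2 := by ring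
      rw [expand, h1]
      linarith [h2]
    have h4 : 1 - maxd / (maxd + lamf) ≤ μ := le_of_mul_le_mul_right h3 hSpos
    have h5 : lamf / (maxd + lamf) = 1 - maxd / (maxd + lamf) := by
      field_simp
      ring
    rw [h5]; exact h4
  · -- operator norm bound
    have hρ0 : 0 ≤ maxd / (maxd + lamf) := div_nonneg hmaxd0 hden.le
    apply ContinuousLinearMap.opNorm_le_bound _ (Real.sqrt_nonneg _)
    intro x
    have hTx : (LinearMap.toContinuousLinearMap (Matrix.toEuclideanLin Ee)) x =
        (WithLp.equiv 2 (Fin n → ℝ)).symm (Ee.mulVec ((WithLp.equiv 2 (Fin p → ℝ)) x)) := rfl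
    rw [hTx, EuclideanSpace.norm_eq, EuclideanSpace.norm_eq, ← Real.sqrt_mul hρ0]
    apply Real.sqrt_le_sqrt
    calc ∑ i, ‖(WithLp.equiv 2 (Fin n → ℝ)).symm
            (Ee.mulVec ((WithLp.equiv 2 (Fin p → ℝ)) x)) i‖ ^ 2
        = ∑ i, (Ee.mulVec ((WithLp.equiv 2 (Fin p → ℝ)) x) i) ^ 2 := by
          simp [Real.norm_eq_abs, sq_abs]
      _ ≤ (maxd / (maxd + lamf)) * ∑ j, (((WithLp.equiv 2 (Fin p → ℝ)) x) j) ^ 2 :=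
          key _
      _ = maxd / (maxd + lamf) * ∑ j, ‖x j‖ ^ 2 := by
          simp [Real.norm_eq_abs, sq_abs]
  · have hlt : maxd / (maxd + lamf) < 1 := (div_lt_one hden).2 (by linarith)
    have := Real.sqrt_lt_sqrt (div_nonneg hmaxd0 hden.le) hlt
    simpa using this
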